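/- Let W : [0,∞) → [0,∞) be the inverse of x ↦ x·exp(x) (the Lambert W function restricted to nonnegative reals). For parameters τ > 0, α > 0, and neighbor effort y ≥ 0, the unique maximizer y_i ≥ 0 of the utility U(y_i) = 1 - exp(-τ(y_i + y)) - y_i^{α+1}/(α+1) over y_i ≥ 0 is y_i = (α/τ) · W((τ^{(α+1)/α}/α) · exp(-τ·y/α)). -/

import Mathlib

/-- The Lambert W function on `[0,∞)`: the inverse of `x ↦ x * exp x` on `[0,∞)`. -/
noncomputable def lambertW (x : ℝ) : ℝ :=
  Function.invFunOn (fun t => t * Real.exp t) (Set.Ici 0) x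

lemma lambertW_spec {c : ℝ} (hc : 0 ≤ c) :
    lambertW c ∈ Set.Ici (0:ℝ) ∧ lambertW c * Real.exp (lambertW c) = c := by
  have hcont : ContinuousOn (fun t : ℝ => t * Real.exp t) (Set.Icc 0 c) :=
    (continuous_id.mul Real.continuous_exp).continuousOn
  have hmem : c ∈ Set.Icc ((0:ℝ) * Real.exp 0) (c * Real.exp c) := by
    constructor
    · simpa using hc
    · nlinarith [Real.one_le_exp hc]
  have := intermediate_value_Icc hc hcont hmem
  obtain ⟨a, ha, hfa⟩ := this
  have hex : ∃ a ∈ Set.Ici (0:ℝ), a * Real.exp a = c := ⟨a, ha.1, hfa⟩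
  exact ⟨Function.invFunOn_mem hex, Function.invFunOn_eq hex⟩

/-- For τ > 0, α > 0, y ≥ 0, the unique maximizer over `y_i ≥ 0` of
`U(y_i) = 1 - exp(-τ(y_i+y)) - y_i^(α+1)/(α+1)` is
`(α/τ) * W((τ^((α+1)/α)/α) * exp(-τ y/α))`. -/
theorem best_response_unique_maximizer (τ α y : ℝ) (hτ : 0 < τ) (hα : 0 < α) (hy : 0 ≤ y) :
    let U : ℝ → ℝ := fun t => 1 - Real.exp (-τ * (t + y)) - t ^ (α + 1) / (α + 1)
    let yi : ℝ := (α / τ) * lambertW ((τ ^ ((α + 1) / α) / α) * Real.exp (-τ * y / α))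
    yi ∈ Set.Ici (0 : ℝ) ∧ IsMaxOn U (Set.Ici 0) yi ∧
      ∀ z ∈ Set.Ici (0 : ℝ), IsMaxOn U (Set.Ici 0) z → z = yi := by
  intro U yi
  have hc : (0:ℝ) < (τ ^ ((α + 1) / α) / α) * Real.exp (-τ * y / α) := by
    have : (0:ℝ) < τ ^ ((α + 1) / α) := Real.rpow_pos_of_pos hτ _
    positivity
  obtain ⟨hw_mem, hfw⟩ := lambertW_spec hc.le
  set c : ℝ := (τ ^ ((α + 1) / α) / α) * Real.exp (-τ * y / α) with hc_def
  set w : ℝ := lambertW c with hw_def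
  have hw0 : 0 < w := by
    rcases lt_or_eq_of_le (Set.mem_Ici.mp hw_mem) with h | h
    · exact h
    · exfalso
      rw [← h] at hfw
      simp at hfw
      rw [← hfw] at hc
      exact lt_irrefl 0 hc
  have hyi : yi = α / τ * w := rfl
  have hyi0 : 0 < yi := by rw [hyi]; positivity
  have hτyi : τ * yi = α * w := by
    rw [hyi]; field_simp
  -- first order condition
  have foc : τ * Real.exp (-τ * (yi + y)) = yi ^ α := by
    have h1 : 0 < τ * Real.exp (-τ * (yi + y)) := by positivity
    have h2 : 0 < yi ^ α := Real.rpow_pos_of_pos hyi0 _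
    have hlogc : Real.log c = (α + 1) / α * Real.log τ - Real.log α - τ * y / α := by
      rw [hc_def, Real.log_mul (by positivity) (Real.exp_ne_zero _),
        Real.log_div (by positivity) hα.ne', Real.log_rpow hτ, Real.log_exp]
      ring
    have hlogw : Real.log w + w = Real.log c := by
      rw [← hfw, Real.log_mul hw0.ne' (Real.exp_ne_zero _), Real.log_exp]
    have hlyi : Real.log yi = Real.log α + Real.log w - Real.log τ := by
      rw [hyi, Real.log_mul (by positivity) hw0.ne', Real.log_div hα.ne' hτ.ne']
      ring
    have hlw : Real.log w = (α + 1) / α * Real.log τ - Real.log α - τ * y / α - w := by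
      linarith [hlogw, hlogc]
    have hlog : Real.log (τ * Real.exp (-τ * (yi + y))) = Real.log (yi ^ α) := by
      rw [Real.log_mul hτ.ne' (Real.exp_ne_zero _), Real.log_exp, Real.log_rpow hyi0,
        hlyi, hlw]
      have hexp : τ * (yi + y) = α * w + τ * y := by rw [mul_add, hτyi]
      rw [neg_mul] at *
      field_simp
      nlinarith [hexp]
    calc τ * Real.exp (-τ * (yi + y)) = Real.exp (Real.log (τ * Real.exp (-τ * (yi + y)))) :=
          (Real.exp_log h1).symm
      _ = Real.exp (Real.log (yi ^ α)) := by rw [hlog]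
      _ = yi ^ α := Real.exp_log h2
  -- derivative of U
  have hU' : ∀ t : ℝ, HasDerivAt U (τ * Real.exp (-τ * (t + y)) - t ^ α) t := by
    intro t
    have h1 : HasDerivAt (fun t : ℝ => -τ * (t + y)) (-τ) t := by
      simpa using ((hasDerivAt_id t).add_const y).const_mul (-τ)
    have h2 : HasDerivAt (fun t : ℝ => Real.exp (-τ * (t + y)))
        (Real.exp (-τ * (t + y)) * (-τ)) t := (Real.hasDerivAt_exp _).comp t h1
    have h3 : HasDerivAt (fun t : ℝ => t ^ (α + 1)) ((α + 1) * t ^ α) t := by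
      have := Real.hasDerivAt_rpow_const (x := t) (p := α + 1) (Or.inr (by linarith))
      simpa using this
    have h4 : HasDerivAt (fun t : ℝ => t ^ (α + 1) / (α + 1)) (t ^ α) t := by
      have := h3.div_const (α + 1)
      have hne : α + 1 ≠ 0 := by linarith
      simpa [mul_div_assoc, mul_div_cancel_left₀ _ hne] using this
    have h5 := ((hasDerivAt_const t (1:ℝ)).sub h2).sub h4
    convert h5 using 1
    · rfl
    · rfl
    · rfl
    · ring
  have hcontU : Continuous U := by
    have : ∀ t : ℝ, ContinuousAt U t := fun t => (hU' t).continuousAt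
    exact continuous_iff_continuousAt.mpr this
  -- key strict comparison
  have key : ∀ z ∈ Set.Ici (0:ℝ), z ≠ yi → U z < U yi := by
    intro z hz hne
    rcases lt_or_gt_of_ne hne with h | h
    · have hmono : StrictMonoOn U (Set.Icc 0 yi) := by
        apply strictMonoOn_of_deriv_pos (convex_Icc 0 yi) hcontU.continuousOn
        intro t ht
        rw [interior_Icc] at ht
        rw [(hU' t).deriv]
        have hlt : t ^ α < yi ^ α := Real.rpow_lt_rpow ht.1.le ht.2 hα
        have hexp : τ * Real.exp (-τ * (yi + y)) < τ * Real.exp (-τ * (t + y)) := by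
          apply mul_lt_mul_of_pos_left _ hτ
          apply Real.exp_lt_exp.mpr
          nlinarith [ht.2]
        linarith
      exact hmono ⟨Set.mem_Ici.mp hz, h.le⟩ ⟨hyi0.le, le_refl _⟩ h
    · have hanti : StrictAntiOn U (Set.Ici yi) := by
        apply strictAntiOn_of_deriv_neg (convex_Ici yi) hcontU.continuousOn
        intro t ht
        rw [interior_Ici] at ht
        rw [(hU' t).deriv]
        have hlt : yi ^ α < t ^ α := Real.rpow_lt_rpow hyi0.le ht hα
        have hexp : τ * Real.exp (-τ * (t + y)) < τ * Real.exp (-τ * (yi + y)) := by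
          apply mul_lt_mul_of_pos_left _ hτ
          apply Real.exp_lt_exp.mpr
          nlinarith [Set.mem_Ioi.mp ht]
        linarith
      exact hanti (Set.self_mem_Ici) (Set.mem_Ici.mpr h.le) h
  refine ⟨Set.mem_Ici.mpr hyi0.le, ?_, ?_⟩
  · intro z hz
    rcases eq_or_ne z yi with rfl | hne
    · exact Set.mem_setOf.mpr (le_refl _)
    · exact Set.mem_setOf.mpr (key z hz hne).le
  · intro z hz hmax
    by_contra hne
    have h1 := key z hz hne
    have h2 : U yi ≤ U z := hmax (Set.mem_Ici.mpr hyi0.le)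
    linarith
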